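/- Let E be a self-dual Hilbert B-module (every bounded B-linear map E → B is represented by an inner product with a fixed element), let φ : B → C be an injective nondegenerate *-homomorphism with φ(B) = C, and let a : E → F be a bounded φ-linear map into a Hilbert C-module F. Then a has a φ-adjoint: there exists a* : F → E with ⟨y, ax⟩ = φ(⟨a*y, x⟩) for all x ∈ E, y ∈ F. -/

import Mathlib

open scoped RightActions InnerProductSpace

/-- The December 2024 Mathlib `CStarModule` (right Hilbert module: `SMul Aᵐᵒᵖ E`,
`⟪x, y <• a⟫ = ⟪x, y⟫ * a`); Mathlib's `CStarModule` is now a left module. -/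
class RightCStarModule (A E : Type*) [NonUnitalSemiring A] [StarRing A] [Module ℂ A]
    [AddCommGroup E] [Module ℂ E] [PartialOrder A] [SMul Aᵐᵒᵖ E] [Norm A] [Norm E]
    extends Inner A E where
  inner_add_right {x} {y} {z} : inner x (y + z) = inner x y + inner x z
  inner_self_nonneg {x} : 0 ≤ inner x x
  inner_self {x} : inner x x = 0 ↔ x = 0
  inner_op_smul_right {a : A} {x y : E} : inner x (y <• a) = inner x y * a
  inner_smul_right_complex {z : ℂ} {x} {y} : inner x (z • y) = z • inner x y
  star_inner x y : star (inner x y) = inner y x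
  norm_eq_sqrt_norm_inner_self x : ‖x‖ = √‖inner x x‖

/-- A *-homomorphism `φ : B → C` is nondegenerate if the closed linear span of `φ(B)·C`
is all of `C`. -/
def Nondegenerate {B C : Type*} [NonUnitalCStarAlgebra B] [NonUnitalCStarAlgebra C]
    (φ : B →⋆ₙₐ[ℂ] C) : Prop :=
  closure (Submodule.span ℂ {c : C | ∃ b c₀, c = φ b * c₀} : Set C) = Set.univ

/-- The range ideal `B_E` of a Hilbert `B`-module `E`: the closed linear span of all
inner products `⟪x, y⟫`. -/
def rangeIdeal (B E : Type*) [NonUnitalCStarAlgebra B] [PartialOrder B] [StarOrderedRing B]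
    [NormedAddCommGroup E] [NormedSpace ℂ E] [SMul Bᵐᵒᵖ E] [RightCStarModule B E] : Set B :=
  closure (Submodule.span ℂ {b : B | ∃ x y : E, b = ⟪x, y⟫_B} : Set B)

variable {B C D E F G : Type*}
  [NonUnitalCStarAlgebra B] [PartialOrder B] [StarOrderedRing B]
  [NonUnitalCStarAlgebra C] [PartialOrder C] [StarOrderedRing C]
  [NonUnitalCStarAlgebra D] [PartialOrder D] [StarOrderedRing D]
  [NormedAddCommGroup E] [NormedSpace ℂ E] [SMul Bᵐᵒᵖ E] [RightCStarModule B E]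
  [NormedAddCommGroup F] [NormedSpace ℂ F] [SMul Cᵐᵒᵖ F] [RightCStarModule C F]
  [NormedAddCommGroup G] [NormedSpace ℂ G] [SMul Dᵐᵒᵖ G] [RightCStarModule D G]

/-- On a self-dual Hilbert module, every bounded φ-linear map with φ an injective
surjective nondegenerate *-homomorphism has a φ-adjoint. -/
theorem selfdual_phi_linear_adjointable
    (hsd : ∀ R : E → B, (∀ y z : E, R (y + z) = R y + R z) →
      (∀ (y : E) (b : B), R (y <• b) = R y * b) →
      (∃ M : ℝ, ∀ y : E, ‖R y‖ ≤ M * ‖y‖) → ∃ x : E, ∀ y : E, R y = ⟪x, y⟫_B)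
    (φ : B →⋆ₙₐ[ℂ] C) (hφ : Nondegenerate φ)
    (hinj : Function.Injective φ) (hsurj : Function.Surjective φ)
    (a : E → F) (hadd : ∀ x y : E, a (x + y) = a x + a y)
    (hmod : ∀ (x : E) (b : B), a (x <• b) = a x <• φ b)
    (hbdd : ∃ M : ℝ, ∀ x : E, ‖a x‖ ≤ M * ‖x‖) :
    ∃ astar : F → E, ∀ (x : E) (y : F), ⟪y, a x⟫_C = φ ⟪astar y, x⟫_B := by
  obtain ⟨M, hM⟩ := hbdd
  -- the inverse of φ
  let ψ : C ≃ B := (Equiv.ofBijective φ ⟨hinj, hsurj⟩).symm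
  have hψ : ∀ c, φ (ψ c) = c := fun c => (Equiv.ofBijective φ ⟨hinj, hsurj⟩).apply_symm_apply c
  have hψφ : ∀ b, ψ (φ b) = b := fun b => (Equiv.ofBijective φ ⟨hinj, hsurj⟩).symm_apply_apply b
  have hiso : ∀ b : B, ‖φ b‖ = ‖b‖ := NonUnitalStarAlgHom.norm_map φ hinj
  have key : ∀ y : F, ∃ x : E, ∀ z : E, ψ ⟪y, a z⟫_C = ⟪x, z⟫_B := by
    intro y
    refine hsd (fun z => ψ ⟪y, a z⟫_C) ?_ ?_ ?_
    · intro z₁ z₂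
      apply hinj
      simp only [hψ, map_add, hadd, RightCStarModule.inner_add_right]
    · intro z b
      apply hinj
      simp only [hψ, map_mul, hmod, RightCStarModule.inner_op_smul_right]
    · refine ⟨‖y‖ * M, fun z => ?_⟩
      have h1 : ‖ψ ⟪y, a z⟫_C‖ = ‖⟪y, a z⟫_C‖ := by rw [← hiso (ψ _), hψ]
      rw [h1]
      calc ‖⟪y, a z⟫_C‖ ≤ ‖y‖ * ‖a z‖ := by
              letI : CStarModule Cᵐᵒᵖ F :=
                { inner := fun x y => MulOpposite.op ⟪x, y⟫_C
                  inner_add_right := fun {x y z} => by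
                    simp only [RightCStarModule.inner_add_right, MulOpposite.op_add]
                  inner_self_nonneg := fun {x} => by
                    simpa using MulOpposite.op_le_op.mpr (RightCStarModule.inner_self_nonneg (A := C) (x := x))
                  inner_self := fun {x} => by
                    simp only [MulOpposite.op_eq_zero_iff]; exact RightCStarModule.inner_self
                  inner_op_smul_right := fun {b x y} => by
                    have h : b • y = y <• b.unop := rfl
                    show MulOpposite.op ⟪x, b • y⟫_C = b * MulOpposite.op ⟪x, y⟫_C
                    rw [h, RightCStarModule.inner_op_smul_right, MulOpposite.op_mul]; rfl
                  inner_smul_right_complex := fun {w x y} => by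
                    show MulOpposite.op ⟪x, w • y⟫_C = w • MulOpposite.op ⟪x, y⟫_C
                    rw [RightCStarModule.inner_smul_right_complex, MulOpposite.op_smul]
                  star_inner := fun x y => by
                    show star (MulOpposite.op ⟪x, y⟫_C) = MulOpposite.op ⟪y, x⟫_C
                    rw [← MulOpposite.op_star, RightCStarModule.star_inner]
                  norm_eq_sqrt_norm_inner_self := fun x => by
                    show ‖x‖ = √‖MulOpposite.op ⟪x, x⟫_C‖
                    rw [MulOpposite.norm_op]; exact RightCStarModule.norm_eq_sqrt_norm_inner_self x }
              exact CStarModule.norm_inner_le F (A := Cᵐᵒᵖ) (x := y) (y := a z)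
        _ ≤ ‖y‖ * (M * ‖z‖) := mul_le_mul_of_nonneg_left (hM z) (norm_nonneg y)
        _ = ‖y‖ * M * ‖z‖ := by ring
  choose astar hastar using key
  refine ⟨astar, fun x y => ?_⟩
  rw [← hastar y x, hψ]
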